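/- For every k > 0, m ≥ 0 and every real N ≥ e^{2m/k}, the tail sum over integers satisfies ∑_{i > N} i^{−1−k} (log i)^m ≤ (1/N + 2/k) (log N)^m N^{−k}. -/

import Mathlib

open Real

private lemma aux_A (k m N x : ℝ) (hk : 0 < k) (hm : 0 ≤ m) (hs : 2 * m / k ≤ Real.log N)
    (hN1 : 1 ≤ N) (hx : N ≤ x) :
    (Real.log x) ^ m * x ^ (-(k / 2)) ≤ (Real.log N) ^ m * N ^ (-(k / 2)) := by
  have hN0 : (0:ℝ) < N := lt_of_lt_of_le one_pos hN1
  have hx0 : (0:ℝ) < x := lt_of_lt_of_le hN0 hx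
  set s := Real.log N with hsd
  set t := Real.log x with htd
  have hst : s ≤ t := Real.log_le_log hN0 hx
  have hs0 : 0 ≤ s := le_trans (div_nonneg (by linarith) hk.le) hs
  have hxe : x ^ (-(k/2)) = Real.exp (t * (-(k/2))) := by
    rw [Real.rpow_def_of_pos hx0]
  have hNe : N ^ (-(k/2)) = Real.exp (s * (-(k/2))) := by
    rw [Real.rpow_def_of_pos hN0]
  rw [hxe, hNe]
  rcases eq_or_lt_of_le hm with hm0 | hm0
  · rw [← hm0, Real.rpow_zero, Real.rpow_zero]
    simp only [one_mul]
    exact Real.exp_le_exp.mpr (by nlinarith)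
  · have hsp : 0 < s := lt_of_lt_of_le (by positivity) hs
    have htp : 0 < t := lt_of_lt_of_le hsp hst
    have key : t ^ m ≤ s ^ m * Real.exp ((t - s) * (k/2)) := by
      have h1 : t ^ m = s ^ m * (t / s) ^ m := by
        rw [Real.div_rpow htp.le hsp.le]
        field_simp
      have h2 : (t / s) ^ m = Real.exp (Real.log (t / s) * m) := by
        rw [Real.rpow_def_of_pos (by positivity)]
      have h3 : Real.log (t / s) ≤ t / s - 1 := Real.log_le_sub_one_of_pos (by positivity)
      have h4 : Real.log (t / s) * m ≤ (t - s) * (k/2) := by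
        have h5 : Real.log (t / s) * m ≤ (t / s - 1) * m :=
          mul_le_mul_of_nonneg_right h3 hm
        have h6 : (t / s - 1) * m ≤ (t - s) * (k/2) := by
          rw [div_sub_one (ne_of_gt hsp)]
          rw [div_mul_eq_mul_div, div_le_iff₀ hsp]
          have h7 : 2 * m ≤ k * s := by
            rw [div_le_iff₀ hk] at hs; linarith
          nlinarith [sub_nonneg.mpr hst]
        linarith
      calc t ^ m = s ^ m * (t / s) ^ m := h1
        _ ≤ s ^ m * Real.exp ((t - s) * (k/2)) := by
            rw [h2]
            exact mul_le_mul_of_nonneg_left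
              (Real.exp_le_exp.mpr h4) (Real.rpow_nonneg hsp.le m)
    calc t ^ m * Real.exp (t * (-(k/2)))
        ≤ (s ^ m * Real.exp ((t - s) * (k/2))) * Real.exp (t * (-(k/2))) :=
          mul_le_mul_of_nonneg_right key (Real.exp_pos _).le
      _ = s ^ m * Real.exp ((t - s) * (k/2) + t * (-(k/2))) := by
          rw [Real.exp_add]; ring
      _ = s ^ m * Real.exp (s * (-(k/2))) := by ring_nf

private lemma aux_B (k : ℝ) (hk : 0 < k) (x : ℝ) (hx : 2 ≤ x) :
    k / 2 * x ^ (-(1 + k / 2)) ≤ (x - 1) ^ (-(k / 2)) - x ^ (-(k / 2)) := by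
  have hx0 : (0:ℝ) < x := by linarith
  have hx1 : (0:ℝ) < x - 1 := by linarith
  have hsplit : (x - 1) ^ (-(k/2)) = x ^ (-(k/2)) * ((x - 1) / x) ^ (-(k/2)) := by
    rw [← Real.mul_rpow hx0.le (by positivity)]
    congr 1
    field_simp
  have hlog : Real.log ((x - 1) / x) ≤ -1 / x := by
    have := Real.log_le_sub_one_of_pos (show (0:ℝ) < (x-1)/x by positivity)
    have h2 : (x - 1) / x - 1 = -1 / x := by field_simp; ring
    linarith [h2 ▸ this]
  have hexp : ((x - 1) / x) ^ (-(k/2)) ≥ 1 + k / (2 * x) := by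
    rw [Real.rpow_def_of_pos (by positivity)]
    have h1 : Real.log ((x-1)/x) * (-(k/2)) ≥ (-1/x) * (-(k/2)) := by
      apply mul_le_mul_of_nonpos_right hlog (by linarith)
    have h2 : (-1/x) * (-(k/2)) = k / (2*x) := by ring
    have h3 := Real.add_one_le_exp (Real.log ((x-1)/x) * (-(k/2)))
    linarith
  have hxp : (0:ℝ) < x ^ (-(k/2)) := Real.rpow_pos_of_pos hx0 _
  have hsplit2 : x ^ (-(1 + k/2)) = x ^ (-(k/2)) * x⁻¹ := by
    rw [show -(1 + k/2) = -(k/2) + (-1) by ring, Real.rpow_add hx0, Real.rpow_neg_one]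
  have key : (x - 1) ^ (-(k/2)) ≥ x ^ (-(k/2)) * (1 + k / (2*x)) := by
    rw [hsplit]
    exact mul_le_mul_of_nonneg_left hexp hxp.le
  have heq : x ^ (-(k/2)) * (1 + k / (2*x)) = x ^ (-(k/2)) + k/2 * (x ^ (-(k/2)) * x⁻¹) := by
    field_simp
  rw [hsplit2]
  linarith [heq ▸ key]

private lemma aux_C (k : ℝ) (hk : 0 < k) (n₀ : ℕ) (hn : 1 ≤ n₀) (s : Finset ℕ)
    (hs : ∀ i ∈ s, n₀ + 1 ≤ i) :
    ∑ i ∈ s, (((i:ℝ) - 1) ^ (-(k / 2)) - (i:ℝ) ^ (-(k / 2))) ≤ (n₀:ℝ) ^ (-(k / 2)) := by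
  set M := s.sup id with hM
  have hsub : s ⊆ Finset.Ico (n₀ + 1) (M + 1) := by
    intro i hi
    rw [Finset.mem_Ico]
    exact ⟨hs i hi, Nat.lt_succ_of_le (Finset.le_sup (f := id) hi)⟩
  have hnonneg : ∀ i : ℕ, n₀ + 1 ≤ i →
      0 ≤ ((i:ℝ) - 1) ^ (-(k/2)) - (i:ℝ) ^ (-(k/2)) := by
    intro i hi
    have h2 : (2:ℝ) ≤ (i:ℝ) := by
      have : 2 ≤ i := by omega
      exact_mod_cast this
    have h1 : (0:ℝ) < (i:ℝ) - 1 := by linarith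
    exact sub_nonneg.mpr (Real.rpow_le_rpow_of_nonpos h1 (by linarith) (by linarith))
  have step1 : ∑ i ∈ s, (((i:ℝ) - 1) ^ (-(k/2)) - (i:ℝ) ^ (-(k/2)))
      ≤ ∑ i ∈ Finset.Ico (n₀ + 1) (M + 1), (((i:ℝ) - 1) ^ (-(k/2)) - (i:ℝ) ^ (-(k/2))) := by
    apply Finset.sum_le_sum_of_subset_of_nonneg hsub
    intro i hi _
    exact hnonneg i (Finset.mem_Ico.mp hi).1
  set F : ℕ → ℝ := fun j => ((n₀ + j : ℕ) : ℝ) ^ (-(k/2)) with hF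
  have step2 : ∑ i ∈ Finset.Ico (n₀ + 1) (M + 1), (((i:ℝ) - 1) ^ (-(k/2)) - (i:ℝ) ^ (-(k/2)))
      = F 0 - F (M + 1 - (n₀ + 1)) := by
    rw [Finset.sum_Ico_eq_sum_range]
    have hterm : ∀ j : ℕ, (((n₀ + 1 + j : ℕ) : ℝ) - 1) ^ (-(k/2))
        - ((n₀ + 1 + j : ℕ) : ℝ) ^ (-(k/2)) = F j - F (j + 1) := by
      intro j
      have e1 : ((n₀ + 1 + j : ℕ) : ℝ) - 1 = ((n₀ + j : ℕ) : ℝ) := by push_cast; ring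
      have e2 : ((n₀ + 1 + j : ℕ) : ℝ) = ((n₀ + (j + 1) : ℕ) : ℝ) := by push_cast; ring
      rw [e1, e2]
    calc ∑ j ∈ Finset.range (M + 1 - (n₀ + 1)),
          ((((n₀ + 1 + j : ℕ)) - 1 : ℝ) ^ (-(k/2)) - ((n₀ + 1 + j : ℕ) : ℝ) ^ (-(k/2)))
        = ∑ j ∈ Finset.range (M + 1 - (n₀ + 1)), (F j - F (j + 1)) := by
          exact Finset.sum_congr rfl fun j _ => hterm j
      _ = F 0 - F (M + 1 - (n₀ + 1)) := Finset.sum_range_sub' F _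
  have hF0 : F 0 = (n₀:ℝ) ^ (-(k/2)) := by simp [hF]
  have hFn : 0 ≤ F (M + 1 - (n₀ + 1)) := Real.rpow_nonneg (Nat.cast_nonneg _) _
  calc ∑ i ∈ s, (((i:ℝ) - 1) ^ (-(k/2)) - (i:ℝ) ^ (-(k/2)))
      ≤ F 0 - F (M + 1 - (n₀ + 1)) := step2 ▸ step1
    _ ≤ F 0 := by linarith
    _ = (n₀:ℝ) ^ (-(k/2)) := hF0

theorem stmt_7 (k m N : ℝ) (hk : 0 < k) (hm : 0 ≤ m) (hN : Real.exp (2 * m / k) ≤ N) :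
    (∑' i : ℕ, if N < (i : ℝ) then (i : ℝ) ^ (-(1 + k)) * (Real.log i) ^ m else 0)
      ≤ (1 / N + 2 / k) * (Real.log N) ^ m * N ^ (-k) := by
  have hmk : 0 ≤ 2 * m / k := div_nonneg (by linarith) hk.le
  have hN1 : (1:ℝ) ≤ N := le_trans (Real.one_le_exp hmk) hN
  have hN0 : (0:ℝ) < N := lt_of_lt_of_le one_pos hN1
  have hlog : 2 * m / k ≤ Real.log N := (Real.le_log_iff_exp_le hN0).mpr hN
  have hlogN0 : 0 ≤ Real.log N := le_trans hmk hlog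
  have hLm : 0 ≤ (Real.log N) ^ m := Real.rpow_nonneg hlogN0 m
  set C : ℝ := (Real.log N) ^ m * N ^ (-(k/2)) with hC
  have hC0 : 0 ≤ C := mul_nonneg hLm (Real.rpow_nonneg hN0.le _)
  set i₀ : ℕ := Nat.floor N + 1 with hi₀d
  have hNi₀ : N < (i₀:ℝ) := by
    have := Nat.lt_floor_add_one N
    push_cast
    exact_mod_cast this
  have h2i₀ : 2 ≤ i₀ := by
    have h1 : 1 ≤ Nat.floor N := Nat.le_floor (by exact_mod_cast hN1)
    omega
  set T1 : ℝ := 1 / N * (Real.log N) ^ m * N ^ (-k) with hT1d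
  have hT1 : 0 ≤ T1 := mul_nonneg (mul_nonneg (by positivity) hLm) (Real.rpow_nonneg hN0.le _)
  have hRHS0 : 0 ≤ (1 / N + 2 / k) * (Real.log N) ^ m * N ^ (-k) :=
    mul_nonneg (mul_nonneg (by positivity) hLm) (Real.rpow_nonneg hN0.le _)
  apply tsum_le_of_sum_le' hRHS0
  intro s
  set g1 : ℕ → ℝ := fun i => if i = i₀ then T1 else 0 with hg1
  set g2 : ℕ → ℝ := fun i => if i₀ + 1 ≤ i then
      2 / k * C * (((i:ℝ) - 1) ^ (-(k/2)) - (i:ℝ) ^ (-(k/2))) else 0 with hg2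
  have hdiff : ∀ i : ℕ, i₀ + 1 ≤ i →
      0 ≤ ((i:ℝ) - 1) ^ (-(k/2)) - (i:ℝ) ^ (-(k/2)) := by
    intro i hi
    have h2 : (2:ℝ) ≤ (i:ℝ) := by
      have : 2 ≤ i := by omega
      exact_mod_cast this
    exact sub_nonneg.mpr (Real.rpow_le_rpow_of_nonpos (by linarith) (by linarith) (by linarith))
  have hg1nn : ∀ i, 0 ≤ g1 i := by
    intro i; simp only [hg1]; split_ifs; exacts [hT1, le_refl 0]
  have hg2nn : ∀ i, 0 ≤ g2 i := by
    intro i; simp only [hg2]; split_ifs with h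
    · exact mul_nonneg (mul_nonneg (by positivity) hC0) (hdiff i h)
    · exact le_refl 0
  have hfle : ∀ i : ℕ, N < (i:ℝ) →
      (i:ℝ) ^ (-(1 + k)) * (Real.log i) ^ m ≤ (i:ℝ) ^ (-(1 + k/2)) * C := by
    intro i hi
    have hx0 : (0:ℝ) < (i:ℝ) := lt_trans hN0 hi
    have key := aux_A k m N (i:ℝ) hk hm hlog hN1 hi.le
    calc (i:ℝ) ^ (-(1 + k)) * (Real.log i) ^ m
        = (i:ℝ) ^ (-(1 + k/2)) * ((Real.log i) ^ m * (i:ℝ) ^ (-(k/2))) := by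
          rw [show -(1 + k) = -(1 + k/2) + -(k/2) by ring, Real.rpow_add hx0]; ring
      _ ≤ (i:ℝ) ^ (-(1 + k/2)) * C :=
          mul_le_mul_of_nonneg_left key (Real.rpow_nonneg hx0.le _)
  have hpt : ∀ i ∈ s, (if N < (i:ℝ) then (i:ℝ) ^ (-(1 + k)) * (Real.log i) ^ m else 0)
      ≤ g1 i + g2 i := by
    intro i _
    by_cases hi : N < (i:ℝ)
    · rw [if_pos hi]
      by_cases hii : i = i₀
      · have hg2z : g2 i = 0 := by
          rw [hg2]; simp only []
          exact if_neg (by omega)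
        have hg1v : g1 i = T1 := by simp [hg1, hii]
        rw [hg1v, hg2z, add_zero]
        have step1 : (i:ℝ) ^ (-(1 + k)) * (Real.log i) ^ m ≤ (i:ℝ) ^ (-(1 + k/2)) * C :=
          hfle i hi
        have step2 : (i:ℝ) ^ (-(1 + k/2)) ≤ N ^ (-(1 + k/2)) := by
          apply Real.rpow_le_rpow_of_nonpos hN0 hi.le
          linarith
        have step3 : N ^ (-(1 + k/2)) * C = T1 := by
          rw [hT1d, hC]
          rw [show -(1 + k/2) = (-1) + (-(k/2)) by ring, Real.rpow_add hN0,
            Real.rpow_neg_one, show -k = -(k/2) + -(k/2) by ring, Real.rpow_add hN0]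
          rw [one_div]
          ring
        calc (i:ℝ) ^ (-(1 + k)) * (Real.log i) ^ m
            ≤ (i:ℝ) ^ (-(1 + k/2)) * C := step1
          _ ≤ N ^ (-(1 + k/2)) * C := mul_le_mul_of_nonneg_right step2 hC0
          _ = T1 := step3
      · have hile : i₀ + 1 ≤ i := by
          have h1 : Nat.floor N < i := (Nat.floor_lt hN0.le).mpr hi
          omega
        have hg1z : g1 i = 0 := by simp [hg1, hii]
        have hg2v : g2 i = 2 / k * C * (((i:ℝ) - 1) ^ (-(k/2)) - (i:ℝ) ^ (-(k/2))) := by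
          simp only [hg2]; exact if_pos hile
        rw [hg1z, hg2v, zero_add]
        have h2r : (2:ℝ) ≤ (i:ℝ) := by
          have : 2 ≤ i := by omega
          exact_mod_cast this
        have hB := aux_B k hk (i:ℝ) h2r
        have hstep : (i:ℝ) ^ (-(1 + k/2)) ≤
            2 / k * (((i:ℝ) - 1) ^ (-(k/2)) - (i:ℝ) ^ (-(k/2))) := by
          have h1 : (i:ℝ) ^ (-(1 + k/2)) = 2 / k * (k / 2 * (i:ℝ) ^ (-(1 + k/2))) := by
            field_simp
          rw [h1]
          exact mul_le_mul_of_nonneg_left hB (by positivity)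
        calc (i:ℝ) ^ (-(1 + k)) * (Real.log i) ^ m
            ≤ (i:ℝ) ^ (-(1 + k/2)) * C := hfle i hi
          _ ≤ (2 / k * (((i:ℝ) - 1) ^ (-(k/2)) - (i:ℝ) ^ (-(k/2)))) * C :=
              mul_le_mul_of_nonneg_right hstep hC0
          _ = 2 / k * C * (((i:ℝ) - 1) ^ (-(k/2)) - (i:ℝ) ^ (-(k/2))) := by ring
    · rw [if_neg hi]
      exact add_nonneg (hg1nn i) (hg2nn i)
  have hsum1 : ∑ i ∈ s, g1 i ≤ T1 := by
    rw [hg1]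
    rw [Finset.sum_ite_eq' s i₀ (fun _ => T1)]
    split_ifs
    · exact le_refl _
    · exact hT1
  have hsum2 : ∑ i ∈ s, g2 i ≤ 2 / k * C * (i₀:ℝ) ^ (-(k/2)) := by
    rw [hg2]
    rw [← Finset.sum_filter]
    rw [← Finset.mul_sum]
    apply mul_le_mul_of_nonneg_left _ (by positivity)
    apply aux_C k hk i₀ (by omega) _
    intro i hi
    exact (Finset.mem_filter.mp hi).2
  have hfinal : T1 + 2 / k * C * (i₀:ℝ) ^ (-(k/2))
      ≤ (1 / N + 2 / k) * (Real.log N) ^ m * N ^ (-k) := by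
    have hi₀N : (i₀:ℝ) ^ (-(k/2)) ≤ N ^ (-(k/2)) :=
      Real.rpow_le_rpow_of_nonpos hN0 hNi₀.le (by linarith)
    have h1 : 2 / k * C * (i₀:ℝ) ^ (-(k/2)) ≤ 2 / k * C * N ^ (-(k/2)) :=
      mul_le_mul_of_nonneg_left hi₀N (by positivity)
    have h2 : T1 + 2 / k * C * N ^ (-(k/2))
        = (1 / N + 2 / k) * (Real.log N) ^ m * N ^ (-k) := by
      rw [hT1d, hC, show -k = -(k/2) + -(k/2) by ring, Real.rpow_add hN0]
      ring
    linarith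
  calc ∑ i ∈ s, (if N < (i:ℝ) then (i:ℝ) ^ (-(1 + k)) * (Real.log i) ^ m else 0)
      ≤ ∑ i ∈ s, (g1 i + g2 i) := Finset.sum_le_sum hpt
    _ = ∑ i ∈ s, g1 i + ∑ i ∈ s, g2 i := Finset.sum_add_distrib
    _ ≤ T1 + 2 / k * C * (i₀:ℝ) ^ (-(k/2)) := add_le_add hsum1 hsum2
    _ ≤ (1 / N + 2 / k) * (Real.log N) ^ m * N ^ (-k) := hfinal
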